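/- On a manifold of nonpositive curvature, the rank function $\operatorname{rank} : UM \to \{1, \ldots, n\}$, assigning to each unit vector $v$ the dimension of the space of parallel Jacobi fields along $\gamma_v$ with vanishing initial derivative, is upper semicontinuous: if $v_n \to v$ then $\limsup \operatorname{rank}(v_n) \le \operatorname{rank}(v)$. -/
import Mathlib


/-- Semicontinuity of the rank.  In a local trivialisation the horizontal
bundle over the unit tangent bundle `U` is `U × E` with `E = ℝⁿ`, and the continuous
function `𝔧(t, v, ξ) = ‖J_ξ(t)‖² - ‖J_ξ(0)‖²` cuts out, for each `v`, the subspace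
`Rank_v = {ξ | ∀ t, 𝔧(t,v,ξ) = 0}` whose dimension is the rank of `v`.  Then for every
`v` there is a neighbourhood `W` of `v` such that `rank u ≤ rank v` for all `u ∈ W`;
i.e. the set `{v : rank v ≤ k}` is open. -/
theorem rank_upper_semicontinuous
    {U : Type*} [TopologicalSpace U] {n : ℕ}
    (𝔧 : ℝ → U → EuclideanSpace ℝ (Fin n) → ℝ)
    (hcont : Continuous fun p : ℝ × U × EuclideanSpace ℝ (Fin n) => 𝔧 p.1 p.2.1 p.2.2)
    (v : U) (Sv : Submodule ℝ (EuclideanSpace ℝ (Fin n)))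
    (hSv : (Sv : Set (EuclideanSpace ℝ (Fin n))) = {ξ | ∀ t : ℝ, 𝔧 t v ξ = 0}) :
    ∃ W ∈ nhds v, ∀ u ∈ W, ∀ Su : Submodule ℝ (EuclideanSpace ℝ (Fin n)),
      (Su : Set (EuclideanSpace ℝ (Fin n))) = {ξ | ∀ t : ℝ, 𝔧 t u ξ = 0} →
      Module.finrank ℝ Su ≤ Module.finrank ℝ Sv := by
  classical
  set K : Set (EuclideanSpace ℝ (Fin n)) :=
    (Svᗮ : Set (EuclideanSpace ℝ (Fin n))) ∩ Metric.sphere 0 1 with hK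
  have hKcompact : IsCompact K :=
    (isCompact_sphere (0 : EuclideanSpace ℝ (Fin n)) 1).of_isClosed_subset
      (Svᗮ.closed_of_finiteDimensional.inter Metric.isClosed_sphere) Set.inter_subset_right
  set O : Set (U × EuclideanSpace ℝ (Fin n)) :=
    ⋃ t : ℝ, {p | 𝔧 t p.1 p.2 ≠ 0} with hO
  have hOopen : IsOpen O := by
    apply isOpen_iUnion
    intro t
    have h : Continuous fun p : U × EuclideanSpace ℝ (Fin n) => 𝔧 t p.1 p.2 := by
      exact hcont.comp (continuous_const.prodMk (continuous_fst.prodMk continuous_snd))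
    exact isOpen_compl_singleton.preimage h
  have hcover : ({v} : Set U) ×ˢ K ⊆ O := by
    rintro ⟨u, ξ⟩ ⟨hu, hξperp, hξs⟩
    simp only [Set.mem_singleton_iff] at hu
    subst hu
    have hξne : ξ ≠ 0 := by
      intro h
      rw [h] at hξs
      simp at hξs
    have hnotin : ξ ∉ Sv := by
      intro h
      have := (Submodule.mem_orthogonal Sv ξ).mp hξperp ξ h
      exact hξne (inner_self_eq_zero.mp this)
    have hex : ¬ (∀ t : ℝ, 𝔧 t u ξ = 0) := fun hall =>
      hnotin (by rw [← SetLike.mem_coe, hSv]; exact hall)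
    push_neg at hex
    obtain ⟨t, ht⟩ := hex
    exact Set.mem_iUnion.mpr ⟨t, ht⟩
  obtain ⟨W, V, hWopen, hVopen, hvW, hKV, hWV⟩ :=
    generalized_tube_lemma isCompact_singleton hKcompact hOopen hcover
  refine ⟨W, hWopen.mem_nhds (hvW rfl), ?_⟩
  intro u hu Su hSu
  have hinf : Su ⊓ Svᗮ = ⊥ := by
    rw [Submodule.eq_bot_iff]
    rintro ξ ⟨hξSu, hξperp⟩
    by_contra hne
    set η := ‖ξ‖⁻¹ • ξ with hη
    have hηK : η ∈ K := by
      refine ⟨Svᗮ.smul_mem _ hξperp, ?_⟩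
      simp [hη, norm_smul, norm_ne_zero_iff.mpr hne]
    have hηSu : η ∈ Su := Su.smul_mem _ hξSu
    have hmem : (u, η) ∈ O := hWV ⟨hu, hKV hηK⟩
    obtain ⟨t, ht⟩ := Set.mem_iUnion.mp hmem
    have hall : ∀ t : ℝ, 𝔧 t u η = 0 := by
      have := hηSu
      rw [← SetLike.mem_coe, hSu] at this
      exact this
    exact ht (hall t)
  have h1 := Submodule.finrank_sup_add_finrank_inf_eq Su Svᗮ
  rw [hinf] at h1
  simp only [finrank_bot, add_zero] at h1
  have h2 : Module.finrank ℝ ↥(Su ⊔ Svᗮ) ≤ Module.finrank ℝ (EuclideanSpace ℝ (Fin n)) :=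
    Submodule.finrank_le _
  have h3 : Module.finrank ℝ Sv + Module.finrank ℝ Svᗮ
      = Module.finrank ℝ (EuclideanSpace ℝ (Fin n)) :=
    Submodule.finrank_add_finrank_orthogonal Sv
  omega
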